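/- arXiv:2101.04742 — 3 statements merged into one kernel-verified Lean document; each statement's English description precedes it below -/
import Mathlib

section
/- Belief Soundness: For every belief state β, environment σ, statement s, belief state β', environment σ', and observation list o, if σ ∈ β and ⟨β, σ, s⟩ ⇓ ⟨β', σ' | o⟩ (the execution succeeds, producing a non-error configuration), then σ' ∈ β'. -/
namespace BLIMP

/-- Program variables. -/
abbrev Var := String
/-- Values. -/
abbrev Val := ℤ
/-- An environment maps program variables to values. -/
abbrev Env := Var → Val
/-- A belief state is a set of environments. -/
abbrev Belief := Set Env

/-- `upd σ x c` is the environment `σ` with `x` rebound to `c` (written `σ[x ↦ c]`). -/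
def upd (σ : Env) (x : Var) (c : Val) : Env :=
  fun z => if z = x then c else σ z

/-- Expressions: program variables, constants, quantified variables,
the placeholder `.` of choose statements, and arithmetic operators. -/
inductive Exp
  | var (x : Var)
  | const (c : Val)
  | qvar (y : String)
  | hole
  | add (e₁ e₂ : Exp)
  | sub (e₁ e₂ : Exp)
  | mul (e₁ e₂ : Exp)
  | div (e₁ e₂ : Exp)

/-- Big-step evaluation of expressions: `⟨σ, e⟩ ⇓ c`. -/
inductive Eval : Env → Exp → Val → Prop
  | var (σ : Env) (x : Var) : Eval σ (.var x) (σ x)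
  | const (σ : Env) (c : Val) : Eval σ (.const c) c
  | add {σ e₁ e₂ c₁ c₂} : Eval σ e₁ c₁ → Eval σ e₂ c₂ → Eval σ (.add e₁ e₂) (c₁ + c₂)
  | sub {σ e₁ e₂ c₁ c₂} : Eval σ e₁ c₁ → Eval σ e₂ c₂ → Eval σ (.sub e₁ e₂) (c₁ - c₂)
  | mul {σ e₁ e₂ c₁ c₂} : Eval σ e₁ c₁ → Eval σ e₂ c₂ → Eval σ (.mul e₁ e₂) (c₁ * c₂)
  | div {σ e₁ e₂ c₁ c₂} : Eval σ e₁ c₁ → Eval σ e₂ c₂ → Eval σ (.div e₁ e₂) (c₁ / c₂)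

/-- Propositions. -/
inductive Pprop
  | bconst (b : Bool)
  | lt (e₁ e₂ : Exp)
  | eq (e₁ e₂ : Exp)
  | and (p₁ p₂ : Pprop)
  | or (p₁ p₂ : Pprop)
  | not (p : Pprop)

/-- Satisfaction of a proposition by an environment: `σ ⊨ p`. -/
def Sat (σ : Env) : Pprop → Prop
  | .bconst b => b = true
  | .lt e₁ e₂ => ∃ c₁ c₂, Eval σ e₁ c₁ ∧ Eval σ e₂ c₂ ∧ c₁ < c₂
  | .eq e₁ e₂ => ∃ c₁ c₂, Eval σ e₁ c₁ ∧ Eval σ e₂ c₂ ∧ c₁ = c₂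
  | .and p₁ p₂ => Sat σ p₁ ∧ Sat σ p₂
  | .or p₁ p₂ => Sat σ p₁ ∨ Sat σ p₂
  | .not p => ¬ Sat σ p

/-- `e.substHole c` replaces the placeholder `.` by the constant `c`. -/
def Exp.substHole : Exp → Val → Exp
  | .var x, _ => .var x
  | .const c, _ => .const c
  | .qvar y, _ => .qvar y
  | .hole, c => .const c
  | .add e₁ e₂, c => .add (e₁.substHole c) (e₂.substHole c)
  | .sub e₁ e₂, c => .sub (e₁.substHole c) (e₂.substHole c)
  | .mul e₁ e₂, c => .mul (e₁.substHole c) (e₂.substHole c)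
  | .div e₁ e₂, c => .div (e₁.substHole c) (e₂.substHole c)

/-- `p.substHole c` is `p[c/.]`. -/
def Pprop.substHole : Pprop → Val → Pprop
  | .bconst b, _ => .bconst b
  | .lt e₁ e₂, c => .lt (e₁.substHole c) (e₂.substHole c)
  | .eq e₁ e₂, c => .eq (e₁.substHole c) (e₂.substHole c)
  | .and p₁ p₂, c => .and (p₁.substHole c) (p₂.substHole c)
  | .or p₁ p₂, c => .or (p₁.substHole c) (p₂.substHole c)
  | .not p, c => .not (p.substHole c)

/-- `e.substQ y c` substitutes the constant `c` for the quantified variable `y`. -/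
def Exp.substQ : Exp → String → Val → Exp
  | .var x, _, _ => .var x
  | .const c', _, _ => .const c'
  | .qvar y', y, c => if y' = y then .const c else .qvar y'
  | .hole, _, _ => .hole
  | .add e₁ e₂, y, c => .add (e₁.substQ y c) (e₂.substQ y c)
  | .sub e₁ e₂, y, c => .sub (e₁.substQ y c) (e₂.substQ y c)
  | .mul e₁ e₂, y, c => .mul (e₁.substQ y c) (e₂.substQ y c)
  | .div e₁ e₂, y, c => .div (e₁.substQ y c) (e₂.substQ y c)

def Pprop.substQ : Pprop → String → Val → Pprop
  | .bconst b, _, _ => .bconst b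
  | .lt e₁ e₂, y, c => .lt (e₁.substQ y c) (e₂.substQ y c)
  | .eq e₁ e₂, y, c => .eq (e₁.substQ y c) (e₂.substQ y c)
  | .and p₁ p₂, y, c => .and (p₁.substQ y c) (p₂.substQ y c)
  | .or p₁ p₂, y, c => .or (p₁.substQ y c) (p₂.substQ y c)
  | .not p, y, c => .not (p.substQ y c)

/-- Modal propositions, built from `□p` and `◇p` by `&&`, `||`, `!`. -/
inductive MProp
  | box (p : Pprop)
  | dia (p : Pprop)
  | and (P₁ P₂ : MProp)
  | or (P₁ P₂ : MProp)
  | not (P : MProp)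

/-- Satisfaction of a modal proposition by a belief state: `β ⊨ P□`. -/
def MSat (β : Belief) : MProp → Prop
  | .box p => ∀ σ ∈ β, Sat σ p
  | .dia p => ∃ σ ∈ β, Sat σ p
  | .and P₁ P₂ => MSat β P₁ ∧ MSat β P₂
  | .or P₁ P₂ => MSat β P₁ ∨ MSat β P₂
  | .not P => ¬ MSat β P

def MProp.substQ : MProp → String → Val → MProp
  | .box p, y, c => .box (p.substQ y c)
  | .dia p, y, c => .dia (p.substQ y c)
  | .and P₁ P₂, y, c => .and (P₁.substQ y c) (P₂.substQ y c)
  | .or P₁ P₂, y, c => .or (P₁.substQ y c) (P₂.substQ y c)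
  | .not P, y, c => .not (P.substQ y c)

/-- Existential propositions `∃ ŷ. P□`. -/
structure EProp where
  vars : List String
  prop : MProp

/-- Satisfaction of `∃ ŷ. P□` by a belief state, by recursion on the
quantified variables. -/
def ESatAux (β : Belief) : List String → MProp → Prop
  | [], P => MSat β P
  | y :: ys, P => ∃ c : Val, ESatAux β ys (P.substQ y c)

/-- `β ⊨ p∃`. -/
def ESat (β : Belief) (pe : EProp) : Prop := ESatAux β pe.vars pe.prop

/-- BLIMP statements. -/
inductive Stmt
  | assign (x : Var) (e : Exp)
  | choose (x : Var) (p : Pprop)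
  | assert (pe : EProp)
  | observe (x : Var)
  | ite (p : Pprop) (s₁ s₂ : Stmt)
  | infer (P : MProp) (s₁ s₂ : Stmt)
  | while (p : Pprop) (inv : EProp) (s : Stmt)
  | seq (s₁ s₂ : Stmt)
  | skip

/-- Observation lists: lists of (variable, value) pairs. -/
abbrev Obs := List (Var × Val)

/-- Configurations: `some (β, μ)` is a non-error configuration; `none` is the error `⊥`. -/
abbrev Config := Option (Belief × Option Env)

/-- Splitting the optional true environment between the branches of an
if statement with nondeterministic condition `p`: the true environment
(if non-null) is passed to the branch whose condition it satisfies,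
and the null environment `·` is passed to the other branch. -/
inductive SplitEnv : Option Env → Pprop → Option Env → Option Env → Prop
  | none {p} : SplitEnv none p none none
  | pos {σ p} (h : Sat σ p) : SplitEnv (some σ) p (some σ) none
  | neg {σ p} (h : ¬ Sat σ p) : SplitEnv (some σ) p none (some σ)

/-- The resulting optional true environment of a nondeterministic if
statement is the one resulting from the branch the true environment
actually took (`·` if the true environment was `·`). -/
inductive JoinEnv : Option Env → Pprop → Option Env → Option Env → Option Env → Prop
  | none {p μT' μF'} : JoinEnv none p μT' μF' none
  | pos {σ p μT' μF'} (h : Sat σ p) : JoinEnv (some σ) p μT' μF' μT'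
  | neg {σ p μT' μF'} (h : ¬ Sat σ p) : JoinEnv (some σ) p μT' μF' μF'

/-- The big-step semantics of BLIMP statements:
`BigStep β μ s C o` means `⟨β, μ, s⟩ ⇓ ⟨C | o⟩`. -/
inductive BigStep : Belief → Option Env → Stmt → Config → Obs → Prop
  /- Assignment. -/
  | assign_none {β x e} :
      BigStep β none (.assign x e)
        (some ({σ' | ∃ σβ ∈ β, ∃ cβ, Eval σβ e cβ ∧ σ' = upd σβ x cβ}, none)) []
  | assign_some {β σ x e c} (h : Eval σ e c) :
      BigStep β (some σ) (.assign x e)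
        (some ({σ' | ∃ σβ ∈ β, ∃ cβ, Eval σβ e cβ ∧ σ' = upd σβ x cβ},
          some (upd σ x c))) []
  /- Choose. -/
  | choose_none {β x p} :
      BigStep β none (.choose x p)
        (some ({σ' | ∃ σβ ∈ β, ∃ cβ, Sat σβ (p.substHole cβ) ∧ σ' = upd σβ x cβ},
          none)) []
  | choose_some {β σ x p c} (h : Sat σ (p.substHole c)) :
      BigStep β (some σ) (.choose x p)
        (some ({σ' | ∃ σβ ∈ β, ∃ cβ, Sat σβ (p.substHole cβ) ∧ σ' = upd σβ x cβ},
          some (upd σ x c))) []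
  /- Assert. -/
  | assert_ok {β μ pe} (h : ESat β pe) :
      BigStep β μ (.assert pe) (some (β, μ)) []
  | assert_fail {β μ pe} (h : ¬ ESat β pe) :
      BigStep β μ (.assert pe) none []
  /- Observe. -/
  | observe_some {β σ x} :
      BigStep β (some σ) (.observe x)
        (some ({σβ ∈ β | σβ x = σ x}, some σ)) [(x, σ x)]
  | observe_none {β x} :
      BigStep β none (.observe x) none []
  /- If with deterministic condition. -/
  | ite_det_true {β μ p s₁ s₂ C o} (h : MSat β (.box p))
      (hs : BigStep β μ s₁ C o) :
      BigStep β μ (.ite p s₁ s₂) C o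
  | ite_det_false {β μ p s₁ s₂ C o} (h : MSat β (.box (.not p)))
      (hs : BigStep β μ s₂ C o) :
      BigStep β μ (.ite p s₁ s₂) C o
  /- If with nondeterministic condition. -/
  | ite_nondet {β μ p s₁ s₂ μT μF βT' βF' μT' μF' μ'}
      (h : MSat β (.and (.dia p) (.dia (.not p))))
      (hsplit : SplitEnv μ p μT μF)
      (hs₁ : BigStep {σβ ∈ β | Sat σβ p} μT s₁ (some (βT', μT')) [])
      (hs₂ : BigStep {σβ ∈ β | ¬ Sat σβ p} μF s₂ (some (βF', μF')) [])
      (hjoin : JoinEnv μ p μT' μF' μ') :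
      BigStep β μ (.ite p s₁ s₂) (some (βT' ∪ βF', μ')) []
  | ite_nondet_obs {β μ p s₁ s₂ μT μF βT' βF' μT' μF' oT oF}
      (h : MSat β (.and (.dia p) (.dia (.not p))))
      (hsplit : SplitEnv μ p μT μF)
      (hs₁ : BigStep {σβ ∈ β | Sat σβ p} μT s₁ (some (βT', μT')) oT)
      (hs₂ : BigStep {σβ ∈ β | ¬ Sat σβ p} μF s₂ (some (βF', μF')) oF)
      (ho : oT ≠ [] ∨ oF ≠ []) :
      BigStep β μ (.ite p s₁ s₂) none []
  | ite_nondet_err₁ {β μ p s₁ s₂ μT μF oT}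
      (h : MSat β (.and (.dia p) (.dia (.not p))))
      (hsplit : SplitEnv μ p μT μF)
      (hs₁ : BigStep {σβ ∈ β | Sat σβ p} μT s₁ none oT) :
      BigStep β μ (.ite p s₁ s₂) none []
  | ite_nondet_err₂ {β μ p s₁ s₂ μT μF oF}
      (h : MSat β (.and (.dia p) (.dia (.not p))))
      (hsplit : SplitEnv μ p μT μF)
      (hs₂ : BigStep {σβ ∈ β | ¬ Sat σβ p} μF s₂ none oF) :
      BigStep β μ (.ite p s₁ s₂) none []
  /- Infer. -/
  | infer_true {β μ P s₁ s₂ C o} (h : MSat β P)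
      (hs : BigStep β μ s₁ C o) :
      BigStep β μ (.infer P s₁ s₂) C o
  | infer_false {β μ P s₁ s₂ C o} (h : ¬ MSat β P)
      (hs : BigStep β μ s₂ C o) :
      BigStep β μ (.infer P s₁ s₂) C o
  /- While: unfolds to an assertion of the invariant followed by an if. -/
  | whileStep {β μ p pe s C o}
      (h : BigStep β μ
        (.seq (.assert pe) (.ite p (.seq s (.while p pe s)) .skip)) C o) :
      BigStep β μ (.while p pe s) C o
  /- Sequencing (also propagates errors from the second statement). -/
  | seq {β μ s₁ s₂ β' μ' C o₁ o₂}
      (hs₁ : BigStep β μ s₁ (some (β', μ')) o₁)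
      (hs₂ : BigStep β' μ' s₂ C o₂) :
      BigStep β μ (.seq s₁ s₂) C (o₁ ++ o₂)
  | seq_err {β μ s₁ s₂ o₁} (hs₁ : BigStep β μ s₁ none o₁) :
      BigStep β μ (.seq s₁ s₂) none o₁
  /- Skip. -/
  | skip {β μ} : BigStep β μ .skip (some (β, μ)) []


theorem belief_soundness_aux {β μ s C o} (h : BigStep β μ s C o) :
    ∀ σ, μ = some σ → σ ∈ β → ∀ β' μ', C = some (β', μ') →
      ∃ σ', μ' = some σ' ∧ σ' ∈ β' := by
  induction h with
  | assign_none => intro σ hσ; simp at hσ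
  | @assign_some β σ₀ x e c h =>
      intro σ hσ hmem β' μ' hC
      obtain rfl : σ₀ = σ := by injection hσ
      injection hC with hC; injection hC with h1 h2
      subst h1; subst h2
      exact ⟨upd σ₀ x c, rfl, σ₀, hmem, c, h, rfl⟩
  | choose_none => intro σ hσ; simp at hσ
  | @choose_some β σ₀ x p c h =>
      intro σ hσ hmem β' μ' hC
      obtain rfl : σ₀ = σ := by injection hσ
      injection hC with hC; injection hC with h1 h2
      subst h1; subst h2
      exact ⟨upd σ₀ x c, rfl, σ₀, hmem, c, h, rfl⟩
  | assert_ok h =>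
      intro σ hσ hmem β' μ' hC
      injection hC with hC; injection hC with h1 h2
      subst h1; subst h2; subst hσ
      exact ⟨σ, rfl, hmem⟩
  | assert_fail h => intro σ hσ hmem β' μ' hC; simp at hC
  | @observe_some β σ₀ x =>
      intro σ hσ hmem β' μ' hC
      obtain rfl : σ₀ = σ := by injection hσ
      injection hC with hC; injection hC with h1 h2
      subst h1; subst h2
      exact ⟨σ₀, rfl, hmem, rfl⟩
  | observe_none =>
      intro σ hσ hmem β' μ' hC; simp at hC
  | ite_det_true h hs ih => exact ih
  | ite_det_false h hs ih => exact ih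
  | @ite_nondet β μ p s₁ s₂ μT μF βT' βF' μT' μF' μ'' h hsplit hs₁ hs₂ hjoin ih₁ ih₂ =>
      intro σ hσ hmem β' μ' hC
      injection hC with hC; injection hC with h1 h2
      subst h1; subst h2; subst hσ
      cases hsplit with
      | pos hp =>
          cases hjoin with
          | pos _ =>
              obtain ⟨σ', rfl, hσ'⟩ := ih₁ σ rfl ⟨hmem, hp⟩ βT' μT' rfl
              exact ⟨σ', rfl, Or.inl hσ'⟩
          | neg hn => exact absurd hp hn
      | neg hn =>
          cases hjoin with
          | pos hp => exact absurd hp hn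
          | neg _ =>
              obtain ⟨σ', rfl, hσ'⟩ := ih₂ σ rfl ⟨hmem, hn⟩ βF' μF' rfl
              exact ⟨σ', rfl, Or.inr hσ'⟩
  | ite_nondet_obs h hsplit hs₁ hs₂ ho ih₁ ih₂ =>
      intro σ hσ hmem β' μ' hC; simp at hC
  | ite_nondet_err₁ h hsplit hs₁ ih =>
      intro σ hσ hmem β' μ' hC; simp at hC
  | ite_nondet_err₂ h hsplit hs₂ ih =>
      intro σ hσ hmem β' μ' hC; simp at hC
  | infer_true h hs ih => exact ih
  | infer_false h hs ih => exact ih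
  | whileStep h ih => exact ih
  | @seq β μ s₁ s₂ β₁ μ₁ C o₁ o₂ hs₁ hs₂ ih₁ ih₂ =>
      intro σ hσ hmem β' μ' hC
      obtain ⟨σ₁, rfl, hσ₁⟩ := ih₁ σ hσ hmem β₁ μ₁ rfl
      exact ih₂ σ₁ rfl hσ₁ β' μ' hC
  | seq_err hs₁ ih =>
      intro σ hσ hmem β' μ' hC; simp at hC
  | skip =>
      intro σ hσ hmem β' μ' hC
      injection hC with hC; injection hC with h1 h2
      subst h1; subst h2; subst hσ
      exact ⟨σ, rfl, hmem⟩

/-- **Belief Soundness** (Theorem 3.1): if `σ ∈ β` and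
`⟨β, σ, s⟩ ⇓ ⟨β', σ' | o⟩`, then `σ' ∈ β'`. -/
theorem belief_soundness
    (β : Belief) (σ : Env) (s : Stmt) (β' : Belief) (σ' : Env) (o : Obs)
    (hmem : σ ∈ β)
    (hstep : BigStep β (some σ) s (some (β', some σ')) o) :
    σ' ∈ β' := by
  obtain ⟨σ'', h1, h2⟩ := belief_soundness_aux hstep σ rfl hmem β' (some σ') rfl
  injection h1 with h1; subst h1; exact h2

end BLIMP
end

section
/- Belief Precision: For every belief state β, optional environment μ, statement s, belief state β', optional environment μ', and observation list o, if ⟨β, μ, s⟩ ⇓ ⟨β', μ' | o⟩ (the execution succeeds, producing a non-error configuration), then for every environment σβ' ∈ β' there is some environment σβ ∈ β such that ⟨β, σβ, s⟩ ⇓ ⟨β', σβ' | o⟩. -/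
namespace BLIMP

/-- Environment erasure: a successful, observation-free run can be replayed
with the null environment. -/
theorem erase_env {β μ s C o} (h : BigStep β μ s C o) :
    ∀ β' μ'', C = some (β', μ'') → o = [] → BigStep β none s (some (β', none)) [] := by
  induction h with
  | assign_none =>
      rintro β' μ'' hC -; cases hC; exact .assign_none
  | assign_some h =>
      rintro β' μ'' hC -; cases hC; exact .assign_none
  | choose_none =>
      rintro β' μ'' hC -; cases hC; exact .choose_none
  | choose_some h =>
      rintro β' μ'' hC -; cases hC; exact .choose_none
  | assert_ok h =>
      rintro β' μ'' hC -; cases hC; exact .assert_ok h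
  | assert_fail h => rintro β' μ'' hC; cases hC
  | observe_some => rintro β' μ'' - ho; cases ho
  | observe_none => rintro β' μ'' hC; cases hC
  | ite_det_true h hs ih =>
      rintro β' μ'' hC ho; exact .ite_det_true h (ih β' μ'' hC ho)
  | ite_det_false h hs ih =>
      rintro β' μ'' hC ho; exact .ite_det_false h (ih β' μ'' hC ho)
  | ite_nondet h hsplit hs₁ hs₂ hjoin ih₁ ih₂ =>
      rintro β' μ'' hC -; cases hC
      exact .ite_nondet h .none (ih₁ _ _ rfl rfl) (ih₂ _ _ rfl rfl) .none
  | ite_nondet_obs h hsplit hs₁ hs₂ ho => rintro β' μ'' hC; cases hC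
  | ite_nondet_err₁ h hsplit hs₁ => rintro β' μ'' hC; cases hC
  | ite_nondet_err₂ h hsplit hs₂ => rintro β' μ'' hC; cases hC
  | infer_true h hs ih =>
      rintro β' μ'' hC ho; exact .infer_true h (ih β' μ'' hC ho)
  | infer_false h hs ih =>
      rintro β' μ'' hC ho; exact .infer_false h (ih β' μ'' hC ho)
  | whileStep h ih =>
      rintro β' μ'' hC ho; exact .whileStep (ih β' μ'' hC ho)
  | seq hs₁ hs₂ ih₁ ih₂ =>
      rintro β'' μ'' hC ho
      rcases List.append_eq_nil_iff.mp ho with ⟨h1, h2⟩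
      have := BigStep.seq (ih₁ _ _ rfl h1) (ih₂ _ _ hC h2)
      simpa using this
  | seq_err hs₁ ih₁ => rintro β' μ'' hC; cases hC
  | skip => rintro β' μ'' hC -; cases hC; exact .skip

theorem belief_precision_aux {β μ s C o} (hstep : BigStep β μ s C o) :
    ∀ β' μ', C = some (β', μ') →
      ∀ σβ' ∈ β', ∃ σβ ∈ β, BigStep β (some σβ) s (some (β', some σβ')) o := by
  induction hstep with
  | @assign_none β x e =>
      rintro β' μ' hC σ' hσ'; cases hC
      obtain ⟨σβ, hσβ, cβ, hev, rfl⟩ := hσ'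
      exact ⟨σβ, hσβ, .assign_some hev⟩
  | @assign_some β σ x e c h =>
      rintro β' μ' hC σ' hσ'; cases hC
      obtain ⟨σβ, hσβ, cβ, hev, rfl⟩ := hσ'
      exact ⟨σβ, hσβ, .assign_some hev⟩
  | @choose_none β x p =>
      rintro β' μ' hC σ' hσ'; cases hC
      obtain ⟨σβ, hσβ, cβ, hsat, rfl⟩ := hσ'
      exact ⟨σβ, hσβ, .choose_some hsat⟩
  | @choose_some β σ x p c h =>
      rintro β' μ' hC σ' hσ'; cases hC
      obtain ⟨σβ, hσβ, cβ, hsat, rfl⟩ := hσ'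
      exact ⟨σβ, hσβ, .choose_some hsat⟩
  | assert_ok h =>
      rintro β' μ' hC σ' hσ'; cases hC
      exact ⟨σ', hσ', .assert_ok h⟩
  | assert_fail h => rintro β' μ' hC; cases hC
  | @observe_some β σ x =>
      rintro β' μ' hC σ' hσ'; cases hC
      obtain ⟨hmem, heq⟩ := hσ'
      refine ⟨σ', hmem, ?_⟩
      have := BigStep.observe_some (β := β) (σ := σ') (x := x)
      rw [heq] at this
      exact this
  | observe_none => rintro β' μ' hC; cases hC
  | ite_det_true h hs ih =>
      rintro β' μ' hC σ' hσ'
      obtain ⟨σβ, hσβ, hstep⟩ := ih β' μ' hC σ' hσ'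
      exact ⟨σβ, hσβ, .ite_det_true h hstep⟩
  | ite_det_false h hs ih =>
      rintro β' μ' hC σ' hσ'
      obtain ⟨σβ, hσβ, hstep⟩ := ih β' μ' hC σ' hσ'
      exact ⟨σβ, hσβ, .ite_det_false h hstep⟩
  | @ite_nondet β μ p s₁ s₂ μT μF βT' βF' μT' μF' μx h hsplit hs₁ hs₂ hjoin ih₁ ih₂ =>
      rintro β' μ' hC σ' hσ'; cases hC
      rcases hσ' with hσ' | hσ'
      · obtain ⟨σT, hσT, hstep₁⟩ := ih₁ βT' μT' rfl σ' hσ'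
        have hstep₂ := erase_env hs₂ βF' μF' rfl rfl
        exact ⟨σT, hσT.1,
          .ite_nondet h (.pos hσT.2) hstep₁ hstep₂ (.pos hσT.2)⟩
      · obtain ⟨σF, hσF, hstep₂⟩ := ih₂ βF' μF' rfl σ' hσ'
        have hstep₁ := erase_env hs₁ βT' μT' rfl rfl
        exact ⟨σF, hσF.1,
          .ite_nondet h (.neg hσF.2) hstep₁ hstep₂ (.neg hσF.2)⟩
  | ite_nondet_obs h hsplit hs₁ hs₂ ho => rintro β' μ' hC; cases hC
  | ite_nondet_err₁ h hsplit hs₁ => rintro β' μ' hC; cases hC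
  | ite_nondet_err₂ h hsplit hs₂ => rintro β' μ' hC; cases hC
  | infer_true h hs ih =>
      rintro β' μ' hC σ' hσ'
      obtain ⟨σβ, hσβ, hstep⟩ := ih β' μ' hC σ' hσ'
      exact ⟨σβ, hσβ, .infer_true h hstep⟩
  | infer_false h hs ih =>
      rintro β' μ' hC σ' hσ'
      obtain ⟨σβ, hσβ, hstep⟩ := ih β' μ' hC σ' hσ'
      exact ⟨σβ, hσβ, .infer_false h hstep⟩
  | whileStep h ih =>
      rintro β' μ' hC σ' hσ'
      obtain ⟨σβ, hσβ, hstep⟩ := ih β' μ' hC σ' hσ'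
      exact ⟨σβ, hσβ, .whileStep hstep⟩
  | @seq β μ s₁ s₂ βm μm C o₁ o₂ hs₁ hs₂ ih₁ ih₂ =>
      rintro β'' μ'' hC σ' hσ'
      obtain ⟨σm, hσm, hstep₂⟩ := ih₂ β'' μ'' hC σ' hσ'
      obtain ⟨σβ, hσβ, hstep₁⟩ := ih₁ βm μm rfl σm hσm
      exact ⟨σβ, hσβ, .seq hstep₁ hstep₂⟩
  | seq_err hs₁ ih₁ => rintro β' μ' hC; cases hC
  | skip =>
      rintro β' μ' hC σ' hσ'; cases hC
      exact ⟨σ', hσ', .skip⟩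

/-- **Belief Precision** (Theorem 3.2): if `⟨β, μ, s⟩ ⇓ ⟨β', μ' | o⟩`, then for
every `σβ' ∈ β'` there is some `σβ ∈ β` such that
`⟨β, σβ, s⟩ ⇓ ⟨β', σβ' | o⟩`. -/
theorem belief_precision
    (β : Belief) (μ : Option Env) (s : Stmt) (β' : Belief) (μ' : Option Env)
    (o : Obs)
    (hstep : BigStep β μ s (some (β', μ')) o) :
    ∀ σβ' ∈ β', ∃ σβ ∈ β, BigStep β (some σβ) s (some (β', some σβ')) o :=
  belief_precision_aux hstep β' μ' rfl

end BLIMP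
end

section
/- Belief Determinism: For every belief state β, optional environments μ₁ and μ₂, statement s, belief states β₁' and β₂', optional environments μ₁' and μ₂', and observation lists o₁ and o₂, if ⟨β, μ₁, s⟩ ⇓ ⟨β₁', μ₁' | o₁⟩ and ⟨β, μ₂, s⟩ ⇓ ⟨β₂', μ₂' | o₂⟩ and o₁ = o₂, then β₁' = β₂'. In other words, the resulting belief state depends on the true environment only through the observation list. -/
namespace BLIMP

/-- Two prefixes of a common list are comparable. -/
theorem prefix_comparable {α : Type*} {l₁ l₂ l₃ : List α}
    (h₁ : l₁ <+: l₃) (h₂ : l₂ <+: l₃) : l₁ <+: l₂ ∨ l₂ <+: l₁ := by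
  rcases le_total l₁.length l₂.length with h | h
  · exact Or.inl (List.prefix_of_prefix_length_le h₁ h₂ h)
  · exact Or.inr (List.prefix_of_prefix_length_le h₂ h₁ h)

/-- Running any statement from the empty belief state yields the empty belief state. -/
theorem empty_out : ∀ {β μ s C o}, BigStep β μ s C o → β = ∅ →
    ∀ {β' μ'}, C = some (β', μ') → β' = ∅ := by
  intro β μ s C o h
  induction h <;> intro hβ β' μ' hC <;> subst hβ
  case assign_none => cases hC; ext σ; simp
  case assign_some => cases hC; ext σ; simp
  case choose_none => cases hC; ext σ; simp
  case choose_some => cases hC; ext σ; simp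
  case assert_ok => cases hC; rfl
  case assert_fail => cases hC
  case observe_some => cases hC; ext σ; simp
  case observe_none => cases hC
  case ite_det_true ih => exact ih rfl hC
  case ite_det_false ih => exact ih rfl hC
  case ite_nondet h _ _ _ _ =>
    obtain ⟨⟨σ, hσ, -⟩, -⟩ := h
    exact absurd hσ (Set.notMem_empty σ)
  case ite_nondet_obs => cases hC
  case ite_nondet_err₁ => cases hC
  case ite_nondet_err₂ => cases hC
  case infer_true ih => exact ih rfl hC
  case infer_false ih => exact ih rfl hC
  case whileStep ih => exact ih rfl hC
  case seq hsB ihB hsA ihA => exact ihB (ihA rfl rfl) hC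
  case seq_err => cases hC
  case skip => cases hC; rfl

private theorem beta_empty {β : Belief} {p : Pprop}
    (h₁ : ∀ σ ∈ β, Sat σ p) (h₂ : ∀ σ ∈ β, Sat σ (.not p)) : β = ∅ := by
  ext σ
  simp only [Set.mem_empty_iff_false, iff_false]
  intro hσ
  exact (h₂ σ hσ) (h₁ σ hσ)

/-- Strengthened belief determinism for prefix-comparable observation lists. -/
theorem belief_det_aux : ∀ {β μ₁ s C₁ o₁}, BigStep β μ₁ s C₁ o₁ →
    ∀ {μ₂ C₂ o₂}, BigStep β μ₂ s C₂ o₂ → (o₁ <+: o₂ ∨ o₂ <+: o₁) →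
    ∀ {βA μA βB μB}, C₁ = some (βA, μA) → C₂ = some (βB, μB) →
    βA = βB ∧ (o₁ = o₂ ∨ βA = ∅) := by
  intro β μ₁ s C₁ o₁ h₁
  induction h₁ <;> intro μ₂ C₂ o₂ h₂ hpre βA μA βB μB hC₁ hC₂
  case assign_none =>
    cases h₂ <;> cases hC₁ <;> cases hC₂ <;> exact ⟨rfl, Or.inl rfl⟩
  case assign_some =>
    cases h₂ <;> cases hC₁ <;> cases hC₂ <;> exact ⟨rfl, Or.inl rfl⟩
  case choose_none =>
    cases h₂ <;> cases hC₁ <;> cases hC₂ <;> exact ⟨rfl, Or.inl rfl⟩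
  case choose_some =>
    cases h₂ <;> cases hC₁ <;> cases hC₂ <;> exact ⟨rfl, Or.inl rfl⟩
  case assert_ok h =>
    cases h₂ with
    | assert_ok h' => cases hC₁; cases hC₂; exact ⟨rfl, Or.inl rfl⟩
    | assert_fail h' => exact absurd h h'
  case assert_fail => cases hC₁
  case observe_some β σ x =>
    cases h₂ with
    | observe_some =>
      cases hC₁; cases hC₂
      rename_i σ'
      have hval : σ x = σ' x := by
        rcases hpre with h | h
        · simpa [List.cons_prefix_cons] using h
        · exact (by simpa [List.cons_prefix_cons] using h : σ' x = σ x).symm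
      refine ⟨by rw [hval], Or.inl (by rw [hval])⟩
    | observe_none => cases hC₂
  case observe_none => cases hC₁
  case ite_det_true h hs ih =>
    cases h₂ with
    | ite_det_true h' hs' => exact ih hs' hpre hC₁ hC₂
    | ite_det_false h' hs' =>
      have hβ : _ = ∅ := beta_empty h h'
      have e₁ := empty_out hs hβ hC₁
      have e₂ := empty_out hs' hβ hC₂
      exact ⟨e₁.trans e₂.symm, Or.inr e₁⟩
    | ite_nondet h' hsplit hs₁ hs₂ hjoin =>
      obtain ⟨-, σ, hσ, hnp⟩ := h'
      exact absurd (h σ hσ) hnp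
    | ite_nondet_obs h' _ _ _ _ => cases hC₂
    | ite_nondet_err₁ h' _ _ => cases hC₂
    | ite_nondet_err₂ h' _ _ => cases hC₂
  case ite_det_false h hs ih =>
    cases h₂ with
    | ite_det_false h' hs' => exact ih hs' hpre hC₁ hC₂
    | ite_det_true h' hs' =>
      have hβ : _ = ∅ := beta_empty h' h
      have e₁ := empty_out hs hβ hC₁
      have e₂ := empty_out hs' hβ hC₂
      exact ⟨e₁.trans e₂.symm, Or.inr e₁⟩
    | ite_nondet h' hsplit hs₁ hs₂ hjoin =>
      obtain ⟨⟨σ, hσ, hp⟩, -⟩ := h'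
      exact absurd hp (h σ hσ)
    | ite_nondet_obs h' _ _ _ _ => cases hC₂
    | ite_nondet_err₁ h' _ _ => cases hC₂
    | ite_nondet_err₂ h' _ _ => cases hC₂
  case ite_nondet h hsplit hs₁ hs₂ hjoin ih₁ ih₂ =>
    cases h₂ with
    | ite_det_true h' hs' =>
      obtain ⟨-, σ, hσ, hnp⟩ := h
      exact absurd (h' σ hσ) hnp
    | ite_det_false h' hs' =>
      obtain ⟨⟨σ, hσ, hp⟩, -⟩ := h
      exact absurd hp (h' σ hσ)
    | ite_nondet h' hsplit' hs₁' hs₂' hjoin' =>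
      cases hC₁; cases hC₂
      obtain ⟨e₁, -⟩ := ih₁ hs₁' (Or.inl List.nil_prefix) rfl rfl
      obtain ⟨e₂, -⟩ := ih₂ hs₂' (Or.inl List.nil_prefix) rfl rfl
      exact ⟨by rw [e₁, e₂], Or.inl rfl⟩
    | ite_nondet_obs h' _ _ _ _ => cases hC₂
    | ite_nondet_err₁ h' _ _ => cases hC₂
    | ite_nondet_err₂ h' _ _ => cases hC₂
  case ite_nondet_obs => cases hC₁
  case ite_nondet_err₁ => cases hC₁
  case ite_nondet_err₂ => cases hC₁
  case infer_true h hs ih =>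
    cases h₂ with
    | infer_true h' hs' => exact ih hs' hpre hC₁ hC₂
    | infer_false h' hs' => exact absurd h h'
  case infer_false h hs ih =>
    cases h₂ with
    | infer_true h' hs' => exact absurd h' h
    | infer_false h' hs' => exact ih hs' hpre hC₁ hC₂
  case whileStep h ih =>
    cases h₂ with
    | whileStep h' => exact ih h' hpre hC₁ hC₂
  case seq hs₁ hs₂ ih₁ ih₂ =>
    cases h₂ with
    | seq hs₁' hs₂' =>
      rename_i β' μ' C o₁ o₂ β'' μ'' o₁' o₂'
      have hcmp : o₁ <+: o₁' ∨ o₁' <+: o₁ := by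
        rcases hpre with h | h
        · exact prefix_comparable ((List.prefix_append o₁ o₂).trans h)
            (List.prefix_append o₁' o₂')
        · exact (prefix_comparable ((List.prefix_append o₁' o₂').trans h)
            (List.prefix_append o₁ o₂)).symm
      obtain ⟨hββ, ho⟩ := ih₁ hs₁' hcmp rfl rfl
      rcases ho with ho | hemp
      · subst ho
        subst hββ
        have hcmp₂ : o₂ <+: o₂' ∨ o₂' <+: o₂ := by
          rcases hpre with h | h
          · exact Or.inl ((List.prefix_append_right_inj o₁).mp h)
          · exact Or.inr ((List.prefix_append_right_inj o₁).mp h)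
        obtain ⟨hfin, ho₂⟩ := ih₂ hs₂' hcmp₂ hC₁ hC₂
        refine ⟨hfin, ho₂.imp (fun h => by rw [h]) id⟩
      · have e₁ := empty_out hs₂ hemp hC₁
        have e₂ := empty_out hs₂' (hββ ▸ hemp) hC₂
        exact ⟨e₁.trans e₂.symm, Or.inr e₁⟩
    | seq_err hs₁' => cases hC₂
  case seq_err => cases hC₁
  case skip =>
    cases h₂
    cases hC₁; cases hC₂
    exact ⟨rfl, Or.inl rfl⟩

/-- **Belief Determinism** (Theorem 3.3): if `⟨β, μ₁, s⟩ ⇓ ⟨β₁', μ₁' | o₁⟩` and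
`⟨β, μ₂, s⟩ ⇓ ⟨β₂', μ₂' | o₂⟩` and `o₁ = o₂`, then `β₁' = β₂'`: the resulting
belief state depends on the true environment only through the observations. -/
theorem belief_determinism
    (β : Belief) (μ₁ μ₂ : Option Env) (s : Stmt)
    (β₁' β₂' : Belief) (μ₁' μ₂' : Option Env) (o₁ o₂ : Obs)
    (h₁ : BigStep β μ₁ s (some (β₁', μ₁')) o₁)
    (h₂ : BigStep β μ₂ s (some (β₂', μ₂')) o₂)
    (ho : o₁ = o₂) :
    β₁' = β₂' := by
  subst ho
  exact (belief_det_aux h₁ h₂ (Or.inl (List.prefix_refl o₁)) rfl rfl).1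

end BLIMP
end
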